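/- In the unit square with a measure μ disintegrating over a measurable partition into horizontal line segments (local unstable manifolds) crossing a small square neighborhood of x₀ ∈ ℝ², with conditional measures equivalent to 1-dimensional Lebesgue measure with uniformly bounded densities: for w > 1 and r < 1, setting ε = r^w, the annulus S = B_{r+ε}(x₀) \ B_r(x₀) (Euclidean balls) satisfies μ(S) ≤ C r^{(w+1)/2} ≤ C ε^{1/2}. In particular Assumption A holds with exponent 1/2. -/

import Mathlib

open MeasureTheory

/-- Local product structure shell bound: if `μ` disintegrates over horizontal leaves with
conditional measures dominated by Lebesgue measure (density bounded by `K`), then for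
`w > 1`, `0 < r < 1` and `ε = r^w`, the Euclidean annulus `B_{r+ε}(x₀) \ B_r(x₀)` has
`μ`-measure at most `C r^{(w+1)/2} ≤ C ε^{1/2}`. In particular Assumption A holds with
exponent `1/2`. -/
theorem stmt7 (μ : Measure (ℝ × ℝ)) [IsProbabilityMeasure μ]
    (ν : Measure ℝ) [IsProbabilityMeasure ν] (x₀ : ℝ × ℝ) (K : ℝ) (hK : 0 < K)
    (hdis : ∀ A : Set (ℝ × ℝ), MeasurableSet A →
      (μ A).toReal ≤ K * ∫ y, (volume {x : ℝ | (x, y) ∈ A}).toReal ∂ν) :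
    ∃ C > (0 : ℝ), ∀ w r : ℝ, 1 < w → 0 < r → r < 1 →
      (μ {p : ℝ × ℝ | r ^ 2 < (p.1 - x₀.1) ^ 2 + (p.2 - x₀.2) ^ 2 ∧
          (p.1 - x₀.1) ^ 2 + (p.2 - x₀.2) ^ 2 ≤ (r + r ^ w) ^ 2}).toReal ≤
        C * r ^ ((w + 1) / 2) ∧
      C * r ^ ((w + 1) / 2) ≤ C * (r ^ w) ^ ((1 : ℝ) / 2) := by
  refine ⟨4 * K, by positivity, fun w r hw hr0 hr1 => ?_⟩
  have hr0' : (0:ℝ) ≤ r := hr0.le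
  set ε := r ^ w with hεdef
  have hε0 : 0 < ε := Real.rpow_pos_of_pos hr0 w
  set a := x₀.1 with ha
  set b := x₀.2 with hb
  set A : Set (ℝ × ℝ) := {p : ℝ × ℝ | r ^ 2 < (p.1 - a) ^ 2 + (p.2 - b) ^ 2 ∧
      (p.1 - a) ^ 2 + (p.2 - b) ^ 2 ≤ (r + ε) ^ 2} with hA
  have hAmeas : MeasurableSet A := by
    have hg : Measurable fun p : ℝ × ℝ => (p.1 - a) ^ 2 + (p.2 - b) ^ 2 := by fun_prop
    exact (measurableSet_lt measurable_const hg).inter (measurableSet_le hg measurable_const)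
  -- the quantity r ^ ((w+1)/2)
  set M : ℝ := r ^ ((w + 1) / 2) with hM
  have hM0 : 0 < M := Real.rpow_pos_of_pos hr0 _
  -- key: 2rε + ε^2 ≤ 4 r^(w+1) and sqrt of that ≤ 2M
  have hsq : Real.sqrt (2 * r * ε + ε ^ 2) ≤ 2 * M := by
    have h1 : r * ε = r ^ (w + 1) := by
      rw [hεdef, Real.rpow_add hr0, Real.rpow_one]; ring
    have h2 : ε ^ 2 = r ^ (2 * w) := by
      rw [hεdef, ← Real.rpow_natCast (r ^ w) 2, ← Real.rpow_mul hr0']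
      norm_num; ring_nf
    have h3 : r ^ (2 * w) ≤ r ^ (w + 1) :=
      Real.rpow_le_rpow_of_exponent_ge hr0 hr1.le (by linarith)
    have h4 : 2 * r * ε + ε ^ 2 ≤ 4 * r ^ (w + 1) := by
      have := Real.rpow_pos_of_pos hr0 (w + 1)
      nlinarith
    have h5 : Real.sqrt (4 * r ^ (w + 1)) = 2 * M := by
      rw [show (4 : ℝ) * r ^ (w + 1) = 2 ^ 2 * r ^ (w + 1) by norm_num,
        Real.sqrt_mul (by positivity), Real.sqrt_sq (by norm_num), hM,
        Real.sqrt_eq_rpow, ← Real.rpow_mul hr0']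
      ring_nf
    calc Real.sqrt (2 * r * ε + ε ^ 2) ≤ Real.sqrt (4 * r ^ (w + 1)) :=
          Real.sqrt_le_sqrt h4
      _ = 2 * M := h5
  -- slice bound
  have key : ∀ y : ℝ, (volume {x : ℝ | (x, y) ∈ A}).toReal ≤ 4 * M := by
    intro y
    set t : ℝ := (y - b) ^ 2 with ht
    set L : ℝ := Real.sqrt (r ^ 2 - t) with hL
    set U : ℝ := Real.sqrt ((r + ε) ^ 2 - t) with hU
    have hLU : U ≤ L + Real.sqrt (2 * r * ε + ε ^ 2) := by
      rcases le_or_gt t (r ^ 2) with hcase | hcase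
      · have hx : (0:ℝ) ≤ r ^ 2 - t := by linarith
        have : (r + ε) ^ 2 - t = (r ^ 2 - t) + (2 * r * ε + ε ^ 2) := by ring
        rw [hU, this]
        have hy : (0:ℝ) ≤ 2 * r * ε + ε ^ 2 := by positivity
        have := Real.sqrt_nonneg (r ^ 2 - t)
        have := Real.sqrt_nonneg (2 * r * ε + ε ^ 2)
        have e1 := Real.sq_sqrt hx
        have e2 := Real.sq_sqrt hy
        have : Real.sqrt ((r ^ 2 - t) + (2 * r * ε + ε ^ 2)) ≤
            Real.sqrt ((L + Real.sqrt (2 * r * ε + ε ^ 2)) ^ 2) := by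
          apply Real.sqrt_le_sqrt
          rw [hL]; nlinarith [Real.sqrt_nonneg (r ^ 2 - t),
            Real.sqrt_nonneg (2 * r * ε + ε ^ 2)]
        calc Real.sqrt ((r ^ 2 - t) + (2 * r * ε + ε ^ 2)) ≤
              Real.sqrt ((L + Real.sqrt (2 * r * ε + ε ^ 2)) ^ 2) := this
          _ = L + Real.sqrt (2 * r * ε + ε ^ 2) := Real.sqrt_sq (by positivity)
      · have : (r + ε) ^ 2 - t ≤ 2 * r * ε + ε ^ 2 := by nlinarith
        have h6 : U ≤ Real.sqrt (2 * r * ε + ε ^ 2) := Real.sqrt_le_sqrt this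
        have := Real.sqrt_nonneg (r ^ 2 - t)
        linarith
    have hUL : U - L ≤ 2 * M := by
      have := hsq; linarith
    have hsub : {x : ℝ | (x, y) ∈ A} ⊆
        Set.Icc (a - U) (a - L) ∪ Set.Icc (a + L) (a + U) := by
      intro x hx
      obtain ⟨h1, h2⟩ := hx
      simp only at h1 h2
      have habs : |x - a| ≤ U := by
        rw [← Real.sqrt_sq_eq_abs, hU]
        exact Real.sqrt_le_sqrt (by linarith)
      have habs' : L ≤ |x - a| := by
        rw [← Real.sqrt_sq_eq_abs, hL]
        exact Real.sqrt_le_sqrt (by linarith)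
      rcases le_or_gt 0 (x - a) with hs | hs
      · right
        rw [abs_of_nonneg hs] at habs habs'
        exact ⟨by linarith, by linarith⟩
      · left
        rw [abs_of_neg hs] at habs habs'
        exact ⟨by linarith, by linarith⟩
    have hvol : volume {x : ℝ | (x, y) ∈ A} ≤ ENNReal.ofReal (4 * M) := by
      calc volume {x : ℝ | (x, y) ∈ A}
          ≤ volume (Set.Icc (a - U) (a - L) ∪ Set.Icc (a + L) (a + U)) :=
            measure_mono hsub
        _ ≤ volume (Set.Icc (a - U) (a - L)) + volume (Set.Icc (a + L) (a + U)) :=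
            measure_union_le _ _
        _ = ENNReal.ofReal ((a - L) - (a - U)) + ENNReal.ofReal ((a + U) - (a + L)) := by
            rw [Real.volume_Icc, Real.volume_Icc]
        _ ≤ ENNReal.ofReal (2 * M) + ENNReal.ofReal (2 * M) := by
            gcongr <;> linarith
        _ = ENNReal.ofReal (2 * M + 2 * M) := by
            rw [ENNReal.ofReal_add (by positivity) (by positivity)]
        _ = ENNReal.ofReal (4 * M) := by ring_nf
    exact ENNReal.toReal_le_of_le_ofReal (by positivity) hvol
  -- assemble
  have hint : (∫ y, (volume {x : ℝ | (x, y) ∈ A}).toReal ∂ν) ≤ 4 * M := by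
    have hnorm : ∀ᵐ y ∂ν, ‖(volume {x : ℝ | (x, y) ∈ A}).toReal‖ ≤ 4 * M := by
      filter_upwards with y
      rw [Real.norm_eq_abs, abs_of_nonneg ENNReal.toReal_nonneg]
      exact key y
    have := norm_integral_le_of_norm_le_const hnorm
    rw [Measure.real, measure_univ, ENNReal.toReal_one, mul_one] at this
    calc (∫ y, (volume {x : ℝ | (x, y) ∈ A}).toReal ∂ν)
        ≤ ‖∫ y, (volume {x : ℝ | (x, y) ∈ A}).toReal ∂ν‖ := le_abs_self _
      _ ≤ 4 * M := this
  constructor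
  · calc (μ A).toReal ≤ K * ∫ y, (volume {x : ℝ | (x, y) ∈ A}).toReal ∂ν :=
        hdis A hAmeas
      _ ≤ K * (4 * M) := by
        apply mul_le_mul_of_nonneg_left hint hK.le
      _ = 4 * K * M := by ring
  · have heq : (ε : ℝ) ^ ((1:ℝ) / 2) = r ^ (w / 2) := by
      rw [hεdef, ← Real.rpow_mul hr0']; ring_nf
    rw [heq]
    apply mul_le_mul_of_nonneg_left _ (by positivity : (0:ℝ) ≤ 4 * K)
    exact Real.rpow_le_rpow_of_exponent_ge hr0 hr1.le (by linarith)
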